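/- For βγ > 1, β ≤ γ, the function h(x) = ((√(βγ)−1)/(√(βγ)+1))·log(λ_c/x) − log((x+γ)/(βx+1)) is nonincreasing on (0, ∞), vanishes at x = √(γ/β), and hence is negative for x > √(γ/β). -/
import Mathlib

open Real Set

lemma stmt_5_aux (t L : ℝ) (h1 : t - 1 ≠ 0) (h2 : t + 1 ≠ 0) :
    (t - 1) / (t + 1) * (t / (t - 1) * L - L / 2) - L / 2 = 0 := by
  field_simp
  ring

theorem stmt_5 (β γ : ℝ) (hβ : 0 < β) (hγ : 0 < γ) (h1 : 1 < β * γ) (hle : β ≤ γ) :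
    AntitoneOn
      (fun x : ℝ =>
        (Real.sqrt (β * γ) - 1) / (Real.sqrt (β * γ) + 1) *
            Real.log ((γ / β) ^ (Real.sqrt (β * γ) / (Real.sqrt (β * γ) - 1)) / x) -
          Real.log ((x + γ) / (β * x + 1)))
      (Set.Ioi 0) ∧
    ((Real.sqrt (β * γ) - 1) / (Real.sqrt (β * γ) + 1) *
            Real.log ((γ / β) ^ (Real.sqrt (β * γ) / (Real.sqrt (β * γ) - 1)) /
              Real.sqrt (γ / β)) -
          Real.log ((Real.sqrt (γ / β) + γ) / (β * Real.sqrt (γ / β) + 1)) = 0) ∧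
    ∀ x : ℝ, Real.sqrt (γ / β) < x →
      (Real.sqrt (β * γ) - 1) / (Real.sqrt (β * γ) + 1) *
            Real.log ((γ / β) ^ (Real.sqrt (β * γ) / (Real.sqrt (β * γ) - 1)) / x) -
          Real.log ((x + γ) / (β * x + 1)) < 0 := by
  have hβγ : (0:ℝ) < β * γ := lt_trans one_pos h1
  set a := Real.sqrt β with ha
  set b := Real.sqrt γ with hb
  have ha0 : 0 < a := Real.sqrt_pos.mpr hβ
  have hb0 : 0 < b := Real.sqrt_pos.mpr hγ
  have ha2 : a ^ 2 = β := Real.sq_sqrt hβ.le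
  have hb2 : b ^ 2 = γ := Real.sq_sqrt hγ.le
  have hsab : Real.sqrt (β * γ) = a * b := Real.sqrt_mul hβ.le γ
  have hs1 : 1 < a * b := by
    rw [← hsab]
    have : Real.sqrt 1 < Real.sqrt (β * γ) := Real.sqrt_lt_sqrt (by norm_num) h1
    simpa using this
  have hr : (0:ℝ) < γ / β := div_pos hγ hβ
  set x₀ := Real.sqrt (γ / β) with hx₀
  have hx0ab : x₀ = b / a := by rw [hx₀, Real.sqrt_div hγ.le]
  have hx00 : 0 < x₀ := Real.sqrt_pos.mpr hr
  set s := Real.sqrt (β * γ)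
  set C1 := (s - 1) / (s + 1) with hC1
  set lc := (γ / β) ^ (s / (s - 1)) with hlc
  have hlc0 : 0 < lc := Real.rpow_pos_of_pos hr _
  set g : ℝ → ℝ := fun x =>
    C1 * (Real.log lc - Real.log x) - (Real.log (x + γ) - Real.log (β * x + 1)) with hg
  set f : ℝ → ℝ := fun x =>
    C1 * Real.log (lc / x) - Real.log ((x + γ) / (β * x + 1)) with hf
  have heq : ∀ x : ℝ, 0 < x → f x = g x := by
    intro x hx
    simp only [hf, hg]
    rw [Real.log_div hlc0.ne' hx.ne',
      Real.log_div (by positivity) (by positivity)]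
  -- derivative
  have hD : ∀ x : ℝ, 0 < x →
      HasDerivAt g (C1 * (0 - x⁻¹) - (1 / (x + γ) - β / (β * x + 1))) x := by
    intro x hx
    have h1' : HasDerivAt (fun x : ℝ => Real.log (x + γ)) (1 / (x + γ)) x := by
      simpa using (((hasDerivAt_id x).add_const γ).log (by positivity))
    have h2' : HasDerivAt (fun x : ℝ => Real.log (β * x + 1)) (β / (β * x + 1)) x := by
      have : HasDerivAt (fun x : ℝ => β * x + 1) β x := by
        simpa using ((hasDerivAt_id x).const_mul β).add_const 1
      simpa using this.log (by positivity)
    have h3' : HasDerivAt (fun x : ℝ => C1 * (Real.log lc - Real.log x))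
        (C1 * (0 - x⁻¹)) x :=
      (((hasDerivAt_const x (Real.log lc)).sub (Real.hasDerivAt_log hx.ne'))).const_mul C1
    exact h3'.sub (h1'.sub h2')
  -- key algebraic identity for the derivative
  have hkey : ∀ x : ℝ, 0 < x →
      C1 * (0 - x⁻¹) - (1 / (x + γ) - β / (β * x + 1)) =
        -((a * b - 1) * (a * x - b) ^ 2) / ((a * b + 1) * x * (x + γ) * (β * x + 1)) := by
    intro x hx
    rw [hC1, hsab, ← ha2, ← hb2]
    have hxg : (0:ℝ) < x + b ^ 2 := by positivity
    have hbx : (0:ℝ) < a ^ 2 * x + 1 := by positivity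
    field_simp
    ring
  have hDle : ∀ x : ℝ, 0 < x →
      C1 * (0 - x⁻¹) - (1 / (x + γ) - β / (β * x + 1)) ≤ 0 := by
    intro x hx
    rw [hkey x hx]
    apply div_nonpos_of_nonpos_of_nonneg
    · nlinarith [sq_nonneg (a * x - b)]
    · have : (0:ℝ) < x + γ := by positivity
      have : (0:ℝ) < β * x + 1 := by positivity
      positivity
  have hDneg : ∀ x : ℝ, x₀ < x →
      C1 * (0 - x⁻¹) - (1 / (x + γ) - β / (β * x + 1)) < 0 := by
    intro x hx
    have hx0 : 0 < x := lt_trans hx00 hx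
    rw [hkey x hx0]
    apply div_neg_of_neg_of_pos
    · have hax : 0 < a * x - b := by
        rw [hx0ab] at hx
        have := (div_lt_iff₀ ha0).mp hx
        linarith [mul_comm b a]
      have := mul_pos (sub_pos.mpr hs1) (pow_pos hax 2)
      linarith
    · have h2 : (0:ℝ) < x + γ := by positivity
      have h3 : (0:ℝ) < β * x + 1 := by positivity
      positivity
  -- antitone for g on Ioi 0
  have hg_anti : AntitoneOn g (Ioi 0) := by
    apply antitoneOn_of_deriv_nonpos (convex_Ioi 0)
    · exact fun x hx => ((hD x hx).differentiableAt).continuousAt.continuousWithinAt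
    · rw [interior_Ioi]
      exact fun x hx => ((hD x hx).differentiableAt).differentiableWithinAt
    · rw [interior_Ioi]
      intro x hx
      rw [(hD x hx).deriv]
      exact hDle x hx
  -- value at x₀
  have hval : g x₀ = 0 := by
    have hloglc : Real.log lc = s / (s - 1) * Real.log (γ / β) := by
      rw [hlc, Real.log_rpow hr]
    have hlogx₀ : Real.log x₀ = Real.log (γ / β) / 2 := by
      rw [hx₀, Real.log_sqrt hr.le]
    have hfrac : (x₀ + γ) = x₀ * (β * x₀ + 1) := by
      have hx₀sq : x₀ ^ 2 = γ / β := Real.sq_sqrt hr.le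
      have : β * x₀ ^ 2 = γ := by rw [hx₀sq]; field_simp
      nlinarith [this]
    have hbx₀ : (0:ℝ) < β * x₀ + 1 := by positivity
    have hlog2 : Real.log (x₀ + γ) - Real.log (β * x₀ + 1) = Real.log x₀ := by
      rw [hfrac, Real.log_mul hx00.ne' hbx₀.ne']
      ring
    simp only [hg]
    rw [hlog2, hloglc, hlogx₀, hC1]
    have hsgt : 1 < s := by rw [hsab]; exact hs1
    exact stmt_5_aux s (Real.log (γ / β)) (sub_ne_zero.mpr (ne_of_gt hsgt))
      (by positivity)
  -- strict antitone on Ici x₀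
  have hg_strict : StrictAntiOn g (Ici x₀) := by
    apply strictAntiOn_of_deriv_neg (convex_Ici x₀)
    · intro x hx
      have hx0 : 0 < x := lt_of_lt_of_le hx00 hx
      exact ((hD x hx0).differentiableAt).continuousAt.continuousWithinAt
    · rw [interior_Ici]
      intro x hx
      have hx0 : 0 < x := lt_trans hx00 hx
      rw [(hD x hx0).deriv]
      exact hDneg x hx
  refine ⟨?_, ?_, ?_⟩
  · intro x hx y hy hxy
    have hx' : (0:ℝ) < x := hx
    have hy' : (0:ℝ) < y := hy
    calc C1 * Real.log (lc / y) - Real.log ((y + γ) / (β * y + 1)) = f y := rfl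
      _ = g y := heq y hy'
      _ ≤ g x := hg_anti hx hy hxy
      _ = f x := (heq x hx').symm
  · calc C1 * Real.log (lc / x₀) - Real.log ((x₀ + γ) / (β * x₀ + 1)) = f x₀ := rfl
      _ = g x₀ := heq x₀ hx00
      _ = 0 := hval
  · intro x hx
    have hx0 : 0 < x := lt_trans hx00 hx
    calc C1 * Real.log (lc / x) - Real.log ((x + γ) / (β * x + 1)) = f x := rfl
      _ = g x := heq x hx0
      _ < g x₀ := hg_strict (self_mem_Ici) (le_of_lt hx) hx
      _ = 0 := hval
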